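/- Consider maximizing ∑_{i=1}^N f(q_i) subject to ∑_{i=1}^j q_i ≤ ∑_{i=1}^j S_i for all j (with f strictly concave increasing, S_i ≥ 0), and let q̂ be the unique optimal solution. For the constrained problem that additionally requires q_i ≥ Ē_i for all i (with Ē_i ≤ S_i): if q̂_k < Ē_k for some k, then every optimal solution q* of the constrained problem satisfies q*_k = Ē_k. -/

import Mathlib

open Finset

section Aux

lemma smooth_ineq {f : ℝ → ℝ} (hconc : StrictConcaveOn ℝ (Set.Ici 0) f)
    {a b ε : ℝ} (hb : 0 ≤ b) (hε : 0 < ε) (hle : ε ≤ (a - b)/2) :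
    f a + f b < f (a - ε) + f (b + ε) := by
  have hab : b < a := by linarith
  have hd : 0 < a - b := by linarith
  have ha0 : (0:ℝ) ≤ a := by linarith
  have hp1 : 0 < (a - b - ε)/(a - b) := div_pos (by linarith) hd
  have hp2 : 0 < ε/(a - b) := div_pos hε hd
  have hsum : (a - b - ε)/(a - b) + ε/(a - b) = 1 := by field_simp; ring
  have e1 := hconc.2 (Set.mem_Ici.2 hb) (Set.mem_Ici.2 ha0) (ne_of_lt hab) hp1 hp2 hsum
  have e2 := hconc.2 (Set.mem_Ici.2 hb) (Set.mem_Ici.2 ha0) (ne_of_lt hab)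
      hp2 hp1 (by linarith)
  simp only [smul_eq_mul] at e1 e2
  have r1 : (a - b - ε)/(a - b) * b + ε/(a - b) * a = b + ε := by
    field_simp; ring
  have r2 : ε/(a - b) * b + (a - b - ε)/(a - b) * a = a - ε := by
    field_simp; ring
  rw [r1] at e1
  rw [r2] at e2
  have hX : (a - b - ε)/(a - b) * f b + ε/(a - b) * f a
      + (ε/(a - b) * f b + (a - b - ε)/(a - b) * f a) = f a + f b := by
    field_simp; ring
  linarith [add_lt_add e1 e2]

lemma transfer_contra {N : ℕ} {S L : Fin N → ℝ} {f : ℝ → ℝ}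
    (hconc : StrictConcaveOn ℝ (Set.Ici 0) f)
    (hL0 : ∀ i, 0 ≤ L i)
    {q : Fin N → ℝ}
    (hlb : ∀ i, L i ≤ q i)
    (hpre : ∀ j : Fin N, ∑ i ∈ Iic j, q i ≤ ∑ i ∈ Iic j, S i)
    (hopt : ∀ q' : Fin N → ℝ, ((∀ i, L i ≤ q' i) ∧
        (∀ j : Fin N, ∑ i ∈ Iic j, q' i ≤ ∑ i ∈ Iic j, S i)) →
      ∑ i, f (q' i) ≤ ∑ i, f (q i))
    {a b : Fin N} (hab : a ≠ b) {ε : ℝ} (hε : 0 < ε)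
    (hεa : L a ≤ q a - ε) (hε2 : ε ≤ (q a - q b)/2)
    (hslack : ∀ j : Fin N, b ≤ j →
      a ≤ j ∨ (∑ i ∈ Iic j, q i) + ε ≤ ∑ i ∈ Iic j, S i) :
    False := by
  classical
  set q' : Fin N → ℝ :=
    fun i => q i + (if i = b then ε else 0) - (if i = a then ε else 0) with hq'
  have hq'a : q' a = q a - ε := by simp [hq', hab]
  have hq'b : q' b = q b + ε := by simp [hq', hab.symm]
  have hq'o : ∀ i, i ≠ a → i ≠ b → q' i = q i := by
    intro i h1 h2; simp [hq', h1, h2]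
  have hsum : ∀ s : Finset (Fin N), ∑ i ∈ s, q' i
      = ∑ i ∈ s, q i + (if b ∈ s then ε else 0) - (if a ∈ s then ε else 0) := by
    intro s
    rw [hq']
    rw [Finset.sum_sub_distrib, Finset.sum_add_distrib,
      Finset.sum_ite_eq' s b (fun _ => ε), Finset.sum_ite_eq' s a (fun _ => ε)]
  have hfeas : (∀ i, L i ≤ q' i) ∧
      (∀ j : Fin N, ∑ i ∈ Iic j, q' i ≤ ∑ i ∈ Iic j, S i) := by
    constructor
    · intro i
      by_cases h1 : i = a
      · rw [h1, hq'a]; exact hεa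
      · by_cases h2 : i = b
        · rw [h2, hq'b]; linarith [hlb b]
        · rw [hq'o i h1 h2]; exact hlb i
    · intro j
      rw [hsum]
      simp only [Finset.mem_Iic]
      by_cases hbj : b ≤ j
      · by_cases haj : a ≤ j
        · simp only [hbj, haj, if_pos]
          linarith [hpre j]
        · rcases hslack j hbj with h3 | h3
          · exact absurd h3 haj
          · simp only [hbj, if_pos, haj, if_neg, not_false_iff]
            linarith
      · by_cases haj : a ≤ j
        · simp only [hbj, if_neg, not_false_iff, haj, if_pos]
          linarith [hpre j]
        · simp only [hbj, haj, if_neg, not_false_iff]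
          linarith [hpre j]
  have hobj : ∑ i, f (q' i)
      = ∑ i, f (q i) + (f (q a - ε) + f (q b + ε) - f (q a) - f (q b)) := by
    rw [← Finset.sum_compl_add_sum ({a, b} : Finset (Fin N)) (fun i => f (q' i)),
      ← Finset.sum_compl_add_sum ({a, b} : Finset (Fin N)) (fun i => f (q i))]
    have hc : ∑ i ∈ ({a, b} : Finset (Fin N))ᶜ, f (q' i)
        = ∑ i ∈ ({a, b} : Finset (Fin N))ᶜ, f (q i) := by
      refine Finset.sum_congr rfl (fun i hi => ?_)
      simp only [Finset.mem_compl, Finset.mem_insert, Finset.mem_singleton, not_or] at hi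
      rw [hq'o i hi.1 hi.2]
    rw [hc, Finset.sum_pair hab, Finset.sum_pair hab, hq'a, hq'b]
    ring
  have hb0 : (0:ℝ) ≤ q b := le_trans (hL0 b) (hlb b)
  have hkey := smooth_ineq hconc hb0 hε hε2
  have := hopt q' hfeas
  rw [hobj] at this
  linarith

lemma Iic_last {N : ℕ} (hN : 0 < N) :
    (Iic (⟨N-1, by omega⟩ : Fin N)) = univ := by
  ext i
  simp only [Finset.mem_Iic, Finset.mem_univ, iff_true, Fin.le_def]
  have := i.isLt
  omega

lemma total_tight {N : ℕ} (hN : 0 < N) {S L : Fin N → ℝ} {f : ℝ → ℝ}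
    (hmono : StrictMonoOn f (Set.Ici 0))
    (hL0 : ∀ i, 0 ≤ L i)
    {q : Fin N → ℝ}
    (hlb : ∀ i, L i ≤ q i)
    (hpre : ∀ j : Fin N, ∑ i ∈ Iic j, q i ≤ ∑ i ∈ Iic j, S i)
    (hopt : ∀ q' : Fin N → ℝ, ((∀ i, L i ≤ q' i) ∧
        (∀ j : Fin N, ∑ i ∈ Iic j, q' i ≤ ∑ i ∈ Iic j, S i)) →
      ∑ i, f (q' i) ≤ ∑ i, f (q i)) :
    ∑ i, q i = ∑ i, S i := by
  classical
  set lst : Fin N := ⟨N-1, by omega⟩ with hlst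
  have hIic : Iic lst = univ := Iic_last hN
  have hle : ∑ i, q i ≤ ∑ i, S i := by
    have := hpre lst
    rwa [hIic] at this
  by_contra hne
  have hlt : ∑ i, q i < ∑ i, S i := lt_of_le_of_ne hle hne
  set ε : ℝ := ∑ i, S i - ∑ i, q i with hε
  have hεpos : 0 < ε := by rw [hε]; linarith
  set q' : Fin N → ℝ := fun i => q i + (if i = lst then ε else 0) with hq'
  have hq'lst : q' lst = q lst + ε := by simp [hq']
  have hq'o : ∀ i, i ≠ lst → q' i = q i := by intro i h; simp [hq', h]
  have hsum : ∀ s : Finset (Fin N), ∑ i ∈ s, q' i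
      = ∑ i ∈ s, q i + (if lst ∈ s then ε else 0) := by
    intro s
    rw [hq', Finset.sum_add_distrib, Finset.sum_ite_eq' s lst (fun _ => ε)]
  have hfeas : (∀ i, L i ≤ q' i) ∧
      (∀ j : Fin N, ∑ i ∈ Iic j, q' i ≤ ∑ i ∈ Iic j, S i) := by
    constructor
    · intro i
      by_cases h : i = lst
      · rw [h, hq'lst]; linarith [hlb lst]
      · rw [hq'o i h]; exact hlb i
    · intro j
      rw [hsum]
      by_cases h : lst ∈ Iic j
      · have h1 : lst ≤ j := Finset.mem_Iic.1 h
        have hj : j = lst := by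
          have h3 := j.isLt
          simp only [hlst, Fin.le_def] at h1
          simp only [hlst, Fin.ext_iff]
          omega
        subst hj
        rw [if_pos h, hIic]
        linarith
      · rw [if_neg h]
        linarith [hpre j]
  have hobj : ∑ i, f (q' i) = ∑ i, f (q i) - f (q lst) + f (q lst + ε) := by
    rw [← Finset.sum_compl_add_sum ({lst} : Finset (Fin N)) (fun i => f (q' i)),
      ← Finset.sum_compl_add_sum ({lst} : Finset (Fin N)) (fun i => f (q i))]
    have hc : ∑ i ∈ ({lst} : Finset (Fin N))ᶜ, f (q' i)
        = ∑ i ∈ ({lst} : Finset (Fin N))ᶜ, f (q i) := by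
      refine Finset.sum_congr rfl (fun i hi => ?_)
      simp only [Finset.mem_compl, Finset.mem_singleton] at hi
      rw [hq'o i hi]
    rw [hc, Finset.sum_singleton, Finset.sum_singleton, hq'lst]
    ring
  have h0 : (0:ℝ) ≤ q lst := le_trans (hL0 lst) (hlb lst)
  have hstr : f (q lst) < f (q lst + ε) :=
    hmono (Set.mem_Ici.2 h0) (Set.mem_Ici.2 (by linarith)) (by linarith)
  have := hopt q' hfeas
  rw [hobj] at this
  linarith

def Rsum {N : ℕ} (m : ℕ) (q : Fin N → ℝ) : ℝ :=
  ∑ i ∈ univ.filter (fun i : Fin N => (i : ℕ) < m), q i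

lemma Rsum_zero {N : ℕ} (q : Fin N → ℝ) : Rsum 0 q = 0 := by
  simp [Rsum]

lemma Rsum_succ {N : ℕ} {m : ℕ} (h : m < N) (q : Fin N → ℝ) :
    Rsum (m + 1) q = Rsum m q + q ⟨m, h⟩ := by
  have hs : (univ.filter (fun i : Fin N => (i : ℕ) < m + 1))
      = insert (⟨m, h⟩ : Fin N) (univ.filter (fun i : Fin N => (i : ℕ) < m)) := by
    ext i
    simp [Fin.ext_iff]
    omega
  rw [Rsum, hs, Finset.sum_insert (by simp), Rsum]
  ring

lemma Rsum_eq_Iic {N : ℕ} (j : Fin N) (q : Fin N → ℝ) :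
    Rsum ((j : ℕ) + 1) q = ∑ i ∈ Iic j, q i :=
  Finset.sum_congr (by ext i; simp only [Finset.mem_filter, Finset.mem_univ, true_and,
    Finset.mem_Iic, Fin.le_def, Nat.lt_succ_iff]) (fun _ _ => rfl)

lemma Rsum_univ {N : ℕ} (q : Fin N → ℝ) : Rsum N q = ∑ i, q i :=
  Finset.sum_congr (by ext i; simp only [Finset.mem_filter, Finset.mem_univ, true_and,
    i.isLt]) (fun _ _ => rfl)

lemma Rsum_le_of_prefix {N : ℕ} {q S : Fin N → ℝ}
    (hpre : ∀ j : Fin N, ∑ i ∈ Iic j, q i ≤ ∑ i ∈ Iic j, S i)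
    {m : ℕ} (hm : m ≤ N) : Rsum m q ≤ Rsum m S := by
  rcases m with _ | m
  · simp [Rsum_zero]
  · have hmN : m < N := by omega
    rw [Rsum_eq_Iic ⟨m, hmN⟩, Rsum_eq_Iic ⟨m, hmN⟩]
    exact hpre _

lemma Rsum_add_le {N : ℕ} {q : Fin N → ℝ} {m : ℕ} {c : ℝ} :
    ∀ d : ℕ, m + d ≤ N → (∀ i : Fin N, m ≤ (i : ℕ) → (i : ℕ) < m + d → c ≤ q i) →
    Rsum m q + d * c ≤ Rsum (m + d) q := by
  intro d
  induction d with
  | zero => simp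
  | succ d ih =>
    intro hN hq
    have h1 : m + d < N := by omega
    rw [show m + (d+1) = (m+d) + 1 by ring, Rsum_succ h1]
    have h2 := ih (by omega) (fun i h3 h4 => hq i h3 (by omega))
    have h3 : c ≤ q ⟨m + d, h1⟩ := hq _ (by simp) (by simp)
    push_cast
    linarith

lemma Rsum_add_ge {N : ℕ} {q : Fin N → ℝ} {m : ℕ} {c : ℝ} :
    ∀ d : ℕ, m + d ≤ N → (∀ i : Fin N, m ≤ (i : ℕ) → (i : ℕ) < m + d → q i ≤ c) →
    Rsum (m + d) q ≤ Rsum m q + d * c := by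
  intro d
  induction d with
  | zero => simp
  | succ d ih =>
    intro hN hq
    have h1 : m + d < N := by omega
    rw [show m + (d+1) = (m+d) + 1 by ring, Rsum_succ h1]
    have h2 := ih (by omega) (fun i h3 h4 => hq i h3 (by omega))
    have h3 : q ⟨m + d, h1⟩ ≤ c := hq _ (by simp) (by simp)
    push_cast
    linarith

end Aux

/-- Lemma 5: if the unconstrained waterfilling solution drops below `Ē k` at
slot `k`, then every optimal solution of the problem with the additional
minimum-consumption constraints uses exactly `Ē k` at slot `k`. -/
theorem stmt_7 (N : ℕ) (hN : 0 < N)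
    (S Ebar : Fin N → ℝ) (hS : ∀ i, 0 ≤ S i)
    (hEbar : ∀ i, 0 ≤ Ebar i) (hES : ∀ i, Ebar i ≤ S i)
    (f : ℝ → ℝ)
    (hconc : StrictConcaveOn ℝ (Set.Ici 0) f)
    (hmono : StrictMonoOn f (Set.Ici 0))
    (qhat : Fin N → ℝ)
    (hqhat_feas : (∀ i, 0 ≤ qhat i) ∧
      (∀ j : Fin N, ∑ i ∈ Iic j, qhat i ≤ ∑ i ∈ Iic j, S i))
    (hqhat_opt : ∀ q : Fin N → ℝ,
      ((∀ i, 0 ≤ q i) ∧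
        (∀ j : Fin N, ∑ i ∈ Iic j, q i ≤ ∑ i ∈ Iic j, S i)) →
      ∑ i, f (q i) ≤ ∑ i, f (qhat i))
    (k : Fin N) (hk : qhat k < Ebar k) :
    ∀ q : Fin N → ℝ,
      ((∀ i, Ebar i ≤ q i) ∧
        (∀ j : Fin N, ∑ i ∈ Iic j, q i ≤ ∑ i ∈ Iic j, S i)) →
      (∀ q' : Fin N → ℝ,
        ((∀ i, Ebar i ≤ q' i) ∧
          (∀ j : Fin N, ∑ i ∈ Iic j, q' i ≤ ∑ i ∈ Iic j, S i)) →
        ∑ i, f (q' i) ≤ ∑ i, f (q i)) →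
      q k = Ebar k := by
  classical
  obtain ⟨hhlb, hhpre⟩ := hqhat_feas
  intro qs hqs hqs_opt
  obtain ⟨hqlb, hqpre⟩ := hqs
  by_contra hne
  have hlt : Ebar k < qs k := lt_of_le_of_ne (hqlb k) (Ne.symm hne)
  have hhk : qhat k < qs k := lt_trans hk hlt
  -- Step 1 : after slot k the optimal constrained solution is at least qs k
  have hstep1 : ∀ j : Fin N, k < j → qs k ≤ qs j := by
    intro j hkj
    by_contra hc
    push_neg at hc
    refine transfer_contra (L := Ebar) hconc hEbar hqlb hqpre hqs_opt
      (a := k) (b := j) (ne_of_lt hkj)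
      (ε := min ((qs k - qs j)/2) (qs k - Ebar k))
      (lt_min (by linarith) (by linarith)) ?_ (min_le_left _ _) ?_
    · have := min_le_right ((qs k - qs j)/2) (qs k - Ebar k)
      linarith
    · intro j' hbj'
      exact Or.inl (le_of_lt (lt_of_lt_of_le hkj hbj'))
  -- Step 2 : qhat is nondecreasing
  have hstep2 : ∀ i j : Fin N, i < j → qhat i ≤ qhat j := by
    intro i j hij
    by_contra hc
    push_neg at hc
    refine transfer_contra (L := fun _ => (0:ℝ)) hconc (fun _ => le_refl 0) hhlb hhpre
      (fun q' h => hqhat_opt q' ⟨h.1, h.2⟩) (a := i) (b := j) (ne_of_lt hij)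
      (ε := (qhat i - qhat j)/2) (by linarith) ?_ le_rfl ?_
    · show (0:ℝ) ≤ qhat i - (qhat i - qhat j)/2
      linarith [hhlb j]
    · intro j' hbj'
      exact Or.inl (le_of_lt (lt_of_lt_of_le hij hbj'))
  -- Step 3 : slack in the cumulative constraint forces qhat flat
  have hstep3 : ∀ (j : Fin N) (h1 : (j:ℕ)+1 < N),
      (∑ i ∈ Iic j, qhat i) < ∑ i ∈ Iic j, S i →
      qhat ⟨(j:ℕ)+1, h1⟩ ≤ qhat j := by
    intro j h1 hsl
    by_contra hc
    push_neg at hc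
    refine transfer_contra (L := fun _ => (0:ℝ)) hconc (fun _ => le_refl 0) hhlb hhpre
      (fun q' h => hqhat_opt q' ⟨h.1, h.2⟩) (a := ⟨(j:ℕ)+1, h1⟩) (b := j)
      (by simp [Fin.ext_iff])
      (ε := min ((qhat ⟨(j:ℕ)+1, h1⟩ - qhat j)/2)
        ((∑ i ∈ Iic j, S i) - ∑ i ∈ Iic j, qhat i))
      (lt_min (by linarith) (by linarith)) ?_ (min_le_left _ _) ?_
    · show (0:ℝ) ≤ qhat ⟨(j:ℕ)+1, h1⟩ - _
      have := min_le_left ((qhat ⟨(j:ℕ)+1, h1⟩ - qhat j)/2)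
        ((∑ i ∈ Iic j, S i) - ∑ i ∈ Iic j, qhat i)
      linarith [hhlb j]
    · intro j' hbj'
      by_cases haj' : (⟨(j:ℕ)+1, h1⟩ : Fin N) ≤ j'
      · exact Or.inl haj'
      · right
        have hb2 : (j:ℕ) ≤ (j':ℕ) := hbj'
        have ha2 : ¬ ((j:ℕ)+1 ≤ (j':ℕ)) := by intro h; exact haj' (Fin.le_def.2 h)
        have hj' : j' = j := Fin.ext (by omega)
        rw [hj']
        have := min_le_right ((qhat ⟨(j:ℕ)+1, h1⟩ - qhat j)/2)
          ((∑ i ∈ Iic j, S i) - ∑ i ∈ Iic j, qhat i)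
        linarith
  -- totals bind for qhat
  have htoth : ∑ i, qhat i = ∑ i, S i :=
    total_tight hN hmono (L := fun _ => (0:ℝ)) (fun _ => le_refl 0) hhlb hhpre
      (fun q' h => hqhat_opt q' ⟨h.1, h.2⟩)
  -- last tight constraint of qs before k
  set P : ℕ → Prop := fun m => Rsum m qs = Rsum m S with hP
  have hP0 : P 0 := by simp [hP, Rsum_zero]
  set t : ℕ := Nat.findGreatest P (k : ℕ) with ht
  have htk : t ≤ (k : ℕ) := Nat.findGreatest_le _
  have htP : Rsum t qs = Rsum t S := Nat.findGreatest_spec (Nat.zero_le _) hP0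
  have htslack : ∀ m, t < m → m ≤ (k : ℕ) → Rsum m qs < Rsum m S := by
    intro m h1 h2
    have h3 : ¬ P m := Nat.findGreatest_is_greatest h1 h2
    have h4 : Rsum m qs ≤ Rsum m S :=
      Rsum_le_of_prefix hqpre (le_trans h2 (le_of_lt k.isLt))
    exact lt_of_le_of_ne h4 h3
  -- Step 5 : between t and k, qs is at least qs k
  have hstep5 : ∀ j : Fin N, t ≤ (j:ℕ) → j < k → qs k ≤ qs j := by
    intro j hjt hjk
    by_contra hc
    push_neg at hc
    have hFne : (Finset.Ico j k).Nonempty := ⟨j, Finset.mem_Ico.2 ⟨le_refl j, hjk⟩⟩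
    set δ : ℝ := (Finset.Ico j k).inf' hFne
      (fun j'' => (∑ i ∈ Iic j'', S i) - ∑ i ∈ Iic j'', qs i) with hδ
    have hδpos : 0 < δ := by
      rw [hδ, Finset.lt_inf'_iff]
      intro j'' hj''
      obtain ⟨hj1, hj2⟩ := Finset.mem_Ico.1 hj''
      have h5 := htslack ((j'':ℕ)+1)
        (by rw [Fin.le_def] at hj1; omega)
        (by rw [Fin.lt_def] at hj2; omega)
      rw [Rsum_eq_Iic j'', Rsum_eq_Iic j''] at h5
      linarith
    refine transfer_contra (L := Ebar) hconc hEbar hqlb hqpre hqs_opt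
      (a := k) (b := j) (ne_of_lt hjk).symm
      (ε := min ((qs k - qs j)/2) (min (qs k - Ebar k) δ))
      (lt_min (by linarith) (lt_min (by linarith) hδpos)) ?_ (min_le_left _ _) ?_
    · have h6 := min_le_right ((qs k - qs j)/2) (min (qs k - Ebar k) δ)
      have h7 := min_le_left (qs k - Ebar k) δ
      linarith
    · intro j'' hbj''
      by_cases hkj'' : k ≤ j''
      · exact Or.inl hkj''
      · right
        have hj''mem : j'' ∈ Finset.Ico j k :=
          Finset.mem_Ico.2 ⟨hbj'', lt_of_not_ge hkj''⟩
        have h8 := Finset.inf'_le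
          (fun j'' => (∑ i ∈ Iic j'', S i) - ∑ i ∈ Iic j'', qs i) hj''mem
        have h6 := min_le_right ((qs k - qs j)/2) (min (qs k - Ebar k) δ)
        have h7 := min_le_right (qs k - Ebar k) δ
        rw [← hδ] at h8
        linarith
  -- compare prefixes at K = k+1
  set K : ℕ := (k : ℕ) + 1 with hK
  have hKN : K ≤ N := k.isLt
  have c1 : Rsum t qhat ≤ Rsum t qs := by
    have := Rsum_le_of_prefix hhpre (le_trans htk (le_of_lt k.isLt))
    rw [← htP] at this
    exact this
  have c2 : Rsum t qs + ((K - t : ℕ) : ℝ) * qs k ≤ Rsum K qs := by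
    have h9 := Rsum_add_le (m := t) (q := qs) (c := qs k) (K - t)
      (by omega) ?_
    · rw [show t + (K - t) = K from by omega] at h9
      exact h9
    · intro i hi1 hi2
      rw [show t + (K - t) = K from by omega] at hi2
      rcases eq_or_lt_of_le (show (i:ℕ) ≤ (k:ℕ) from by omega) with h | h
      · have : i = k := Fin.ext h
        rw [this]
      · exact hstep5 i hi1 (by rwa [Fin.lt_def])
  have c3 : Rsum K qhat ≤ Rsum t qhat + ((K - t : ℕ) : ℝ) * qhat k := by
    have h9 := Rsum_add_ge (m := t) (q := qhat) (c := qhat k) (K - t)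
      (by omega) ?_
    · rw [show t + (K - t) = K from by omega] at h9
      exact h9
    · intro i hi1 hi2
      rw [show t + (K - t) = K from by omega] at hi2
      rcases eq_or_lt_of_le (show (i:ℕ) ≤ (k:ℕ) from by omega) with h | h
      · have : i = k := Fin.ext h
        rw [this]
      · exact hstep2 i k (by rwa [Fin.lt_def])
  have hKt1 : (1:ℝ) ≤ ((K - t : ℕ) : ℝ) := by
    have : 1 ≤ K - t := by omega
    exact_mod_cast this
  have hPk : Rsum K qhat < Rsum K qs := by
    nlinarith [mul_nonneg (sub_nonneg.2 hKt1) (le_of_lt (sub_pos.2 hhk))]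
  -- first tight constraint of qhat at or after K
  have hexu : ∃ m, K ≤ m ∧ m ≤ N ∧ Rsum m qhat = Rsum m S :=
    ⟨N, hKN, le_refl N, by rw [Rsum_univ, Rsum_univ]; exact htoth⟩
  set u : ℕ := Nat.find hexu with hu
  obtain ⟨huK, huN, huEq⟩ : K ≤ u ∧ u ≤ N ∧ Rsum u qhat = Rsum u S := Nat.find_spec hexu
  have humin : ∀ m, K ≤ m → m < u → Rsum m qhat < Rsum m S := by
    intro m h1 h2
    have h3 := Nat.find_min hexu h2
    have h4 : Rsum m qhat ≤ Rsum m S := Rsum_le_of_prefix hhpre (by omega)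
    exact lt_of_le_of_ne h4 (fun he => h3 ⟨h1, by omega, he⟩)
  -- qhat is constant equal to qhat k on [k, u)
  have hconst : ∀ m, (k:ℕ) ≤ m → m < u → ∀ hmN : m < N, qhat ⟨m, hmN⟩ = qhat k := by
    refine Nat.le_induction ?_ ?_
    · intro _ hkN
      congr
    · intro m hkm ih hmu hmN
      have hmN' : m < N := by omega
      have hmu' : m < u := by omega
      have hIH : qhat ⟨m, hmN'⟩ = qhat k := ih hmu' hmN'
      have hsl : Rsum (m+1) qhat < Rsum (m+1) S := humin (m+1) (by omega) hmu
      have hsl' : (∑ i ∈ Iic (⟨m, hmN'⟩ : Fin N), qhat i)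
          < ∑ i ∈ Iic (⟨m, hmN'⟩ : Fin N), S i := by
        rw [← Rsum_eq_Iic, ← Rsum_eq_Iic]
        exact hsl
      have h3 := hstep3 ⟨m, hmN'⟩ hmN hsl'
      have h4 : qhat ⟨m, hmN'⟩ ≤ qhat ⟨m+1, hmN⟩ :=
        hstep2 _ _ (by rw [Fin.mk_lt_mk]; omega)
      rw [← hIH]
      exact le_antisymm h3 h4
  -- final chain
  have c6 : Rsum u qhat ≤ Rsum K qhat + ((u - K : ℕ) : ℝ) * qhat k := by
    have h9 := Rsum_add_ge (m := K) (q := qhat) (c := qhat k) (u - K)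
      (by omega) ?_
    · rw [show K + (u - K) = u from by omega] at h9
      exact h9
    · intro i hi1 hi2
      rw [show K + (u - K) = u from by omega] at hi2
      have := hconst (i:ℕ) (by omega) hi2 i.isLt
      rw [Fin.eta] at this
      exact le_of_eq this
  have c7 : Rsum K qs + ((u - K : ℕ) : ℝ) * qs k ≤ Rsum u qs := by
    have h9 := Rsum_add_le (m := K) (q := qs) (c := qs k) (u - K)
      (by omega) ?_
    · rw [show K + (u - K) = u from by omega] at h9
      exact h9
    · intro i hi1 hi2
      exact hstep1 i (by rw [Fin.lt_def]; omega)
  have c8 : Rsum u qs ≤ Rsum u S := Rsum_le_of_prefix hqpre huN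
  have hD0 : (0:ℝ) ≤ ((u - K : ℕ) : ℝ) := Nat.cast_nonneg _
  have hprod : (0:ℝ) ≤ ((u - K : ℕ) : ℝ) * (qs k - qhat k) :=
    mul_nonneg hD0 (by linarith)
  nlinarith [c6, c7, c8, hPk, huEq, hprod]
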